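/- arXiv:math/0510516 — 2 statements merged into one kernel-verified Lean document; each statement's English description precedes it below -/
import Mathlib

section
/- Let h : ℂ → ℂ be Hölder continuous with exponent γ ∈ (0,1] and constant A, let R > 0, 0 < δ < 1/R, z ∈ ℂ, and 0 < ε < δR. Then the integral T²_ε[h](z) = (i/(2π)) ∬_{εR ≥ |ξ−z| ≥ ε} h(ξ)/(ξ−z)² dξ̄∧dξ satisfies |T²_ε[h](z)| ≤ A·|1−i|^γ·(δR)^γ/γ. In particular the family {T²_ε[h](z)} is uniformly bounded in ε and z. -/
open MeasureTheory Complex Set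
open scoped Real

private lemma radial_bound' (γ ε r : ℝ) (hγ0 : 0 < γ) (hε0 : 0 < ε) (hεr : ε < r) :
    ∫ ξ in Metric.closedBall (0:ℂ) r \ Metric.ball 0 ε, ‖ξ‖ ^ (γ - 2) ≤ 2 * π * r ^ γ / γ := by
  set S₀ := Metric.closedBall (0:ℂ) r \ Metric.ball 0 ε with hS₀
  have hmeas : MeasurableSet S₀ :=
    Metric.isClosed_closedBall.measurableSet.diff Metric.isOpen_ball.measurableSet
  set G : ℝ → ℝ := (Icc ε r).indicator (fun t => t ^ (γ - 2)) with hG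
  have hind : (fun w : ℂ => G ‖w‖) = S₀.indicator (fun w => ‖w‖ ^ (γ - 2)) := by
    funext w
    have hiff : w ∈ S₀ ↔ ‖w‖ ∈ Icc ε r := by
      simp [hS₀, mem_Icc, and_comm, not_lt, Metric.mem_closedBall, Metric.mem_ball,
        dist_zero_right]
    by_cases hw : w ∈ S₀
    · rw [Set.indicator_of_mem hw, hG, Set.indicator_of_mem (hiff.mp hw)]
    · rw [Set.indicator_of_notMem hw, hG,
        Set.indicator_of_notMem (fun hc => hw (hiff.mpr hc))]
  have h1 : ∫ ξ in S₀, ‖ξ‖ ^ (γ - 2) = ∫ w : ℂ, G ‖w‖ := by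
    rw [hind, integral_indicator hmeas]
  rw [h1, integral_fun_norm_addHaar (volume : Measure ℂ) G]
  rw [Complex.finrank_real_complex]
  have hvol : (volume (Metric.ball (0:ℂ) 1)).toReal = π := by
    rw [Complex.volume_ball]
    simp [ENNReal.toReal_mul]
  rw [measureReal_def, hvol]
  have h2 : ∫ y in Ioi (0:ℝ), y ^ (2 - 1) • G y
      = ∫ y in Icc ε r, y ^ (γ - 1) := by
    have heq : ∀ y : ℝ, y ^ (2 - 1) • G y
        = (Icc ε r).indicator (fun y => y * y ^ (γ - 2)) y := by
      intro y
      by_cases hy : y ∈ Icc ε r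
      · rw [hG, Set.indicator_of_mem hy, Set.indicator_of_mem hy]; simp
      · rw [hG, Set.indicator_of_notMem hy, Set.indicator_of_notMem hy]; simp
    simp_rw [heq]
    rw [integral_indicator measurableSet_Icc, Measure.restrict_restrict measurableSet_Icc]
    have hsub : Icc ε r ∩ Ioi 0 = Icc ε r :=
      Set.inter_eq_left.mpr (fun y hy => lt_of_lt_of_le hε0 hy.1)
    rw [hsub]
    refine setIntegral_congr_fun measurableSet_Icc (fun y hy => ?_)
    have hy0 : 0 < y := lt_of_lt_of_le hε0 hy.1
    rw [show γ - 1 = 1 + (γ - 2) by ring, Real.rpow_add hy0, Real.rpow_one]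
  rw [h2]
  have h3 : ∫ y in Icc ε r, y ^ (γ - 1) = (r ^ γ - ε ^ γ) / γ := by
    rw [integral_Icc_eq_integral_Ioc, ← intervalIntegral.integral_of_le hεr.le,
      integral_rpow (Or.inl (by linarith))]
    ring_nf
  rw [h3]
  have hεγ : 0 < ε ^ γ := Real.rpow_pos_of_pos hε0 γ
  have hπ : (0:ℝ) < π := Real.pi_pos
  rw [smul_eq_mul, nsmul_eq_mul]
  push_cast
  rw [show 2 * (π * ((r ^ γ - ε ^ γ) / γ)) = 2 * π * ((r ^ γ - ε ^ γ) / γ) by ring,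
    mul_div_assoc]
  gcongr
  linarith

/-- boundedness of the truncated Hilbert transform `T²_ε[h](z)`
for a Hölder continuous `h`. The two-form `dξ̄∧dξ` is `2i dA`. -/
theorem stmt0 (h : ℂ → ℂ) (γ A R δ ε : ℝ) (hγ0 : 0 < γ) (hγ1 : γ ≤ 1) (hA : 0 ≤ A)
    (hHolder : ∀ w w' : ℂ, ‖h w - h w'‖ ≤ A * ‖w - w'‖ ^ γ)
    (hR : 0 < R) (hδ0 : 0 < δ) (hδ : δ < 1 / R) (z : ℂ) (hε0 : 0 < ε) (hε : ε < δ * R) :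
    ‖(Complex.I / (2 * (π : ℂ))) *
        ∫ ξ in Metric.closedBall z (δ * R) \ Metric.ball z ε,
          h ξ / (ξ - z) ^ 2 * (2 * Complex.I)‖
      ≤ A * ‖(1 : ℂ) - Complex.I‖ ^ γ * (δ * R) ^ γ / γ := by
  have hπ : (0:ℝ) < π := Real.pi_pos
  set C : ℝ := ‖(1 : ℂ) - Complex.I‖ ^ γ with hC
  have hC0 : 0 ≤ C := Real.rpow_nonneg (norm_nonneg _) γ
  set S := Metric.closedBall z (δ * R) \ Metric.ball z ε with hS
  have hSmeas : MeasurableSet S :=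
    Metric.isClosed_closedBall.measurableSet.diff Metric.isOpen_ball.measurableSet
  have hScomp : IsCompact S := (isCompact_closedBall z _).diff Metric.isOpen_ball
  -- continuity of h
  have hc : Continuous h := by
    rw [continuous_iff_continuousAt]
    intro w
    have : Filter.Tendsto (fun x => h x - h w) (nhds w) (nhds 0) := by
      apply squeeze_zero_norm (fun x => hHolder x w)
      have hcont : Continuous fun x : ℂ => A * ‖x - w‖ ^ γ :=
        continuous_const.mul ((continuous_norm.comp
          (continuous_id.sub continuous_const)).rpow_const (fun x => Or.inr hγ0.le))
      simpa [Real.zero_rpow hγ0.ne'] using hcont.tendsto w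
    exact tendsto_sub_nhds_zero_iff.mp this
  -- the rotation by i about z
  set c : Circle := ⟨Complex.I, show Complex.I ∈ Metric.sphere (0:ℂ) 1 by simp⟩ with hcdef
  set φ : ℂ → ℂ := fun ξ => z + Complex.I * (ξ - z) with hφ
  have hφmp : MeasurePreserving φ volume volume := by
    have := ((measurePreserving_add_left volume z).comp
      (rotation c).measurePreserving).comp (measurePreserving_sub_right volume z)
    convert this using 1
    funext ξ; show z + Complex.I * (ξ - z) = z + rotation c (ξ - z); rw [rotation_apply]
  have hφemb : MeasurableEmbedding φ := by
    have := ((Homeomorph.subRight z).trans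
      ((rotation c).toHomeomorph.trans (Homeomorph.addLeft z))).measurableEmbedding
    convert this using 1
    funext ξ; show z + Complex.I * (ξ - z) = z + rotation c (ξ - z); rw [rotation_apply]
  have hφpre : φ ⁻¹' S = S := by
    ext ξ
    simp only [hS, hφ, mem_preimage, mem_diff, Metric.mem_closedBall, Metric.mem_ball,
      dist_eq_norm, add_sub_cancel_left]
    rw [norm_mul, Complex.norm_I, one_mul]
  have hφcont : Continuous φ :=
    continuous_const.add (continuous_const.mul (continuous_id.sub continuous_const))
  -- nonvanishing of ξ - z on S
  have hne : ∀ ξ ∈ S, ξ - z ≠ 0 := by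
    intro ξ hξ
    have : ε ≤ ‖ξ - z‖ := by
      have := hξ.2
      simpa [Metric.mem_ball, dist_eq_norm, not_lt] using this
    intro hcontra
    rw [hcontra, norm_zero] at this
    linarith
  -- integrability
  have hint1 : IntegrableOn (fun ξ => h ξ / (ξ - z) ^ 2) S := by
    apply ContinuousOn.integrableOn_compact hScomp
    exact (hc.continuousOn).div
      ((continuous_id.sub continuous_const).pow 2).continuousOn
      (fun ξ hξ => pow_ne_zero 2 (hne ξ hξ))
  have hint2 : IntegrableOn (fun ξ => h (φ ξ) / (ξ - z) ^ 2) S := by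
    apply ContinuousOn.integrableOn_compact hScomp
    exact ((hc.comp hφcont).continuousOn).div
      ((continuous_id.sub continuous_const).pow 2).continuousOn
      (fun ξ hξ => pow_ne_zero 2 (hne ξ hξ))
  -- key symmetry identity
  set I₀ : ℂ := ∫ ξ in S, h ξ / (ξ - z) ^ 2 with hI₀
  have hkey : I₀ = - ∫ ξ in S, h (φ ξ) / (ξ - z) ^ 2 := by
    have hpre := hφmp.setIntegral_preimage_emb hφemb (fun ξ => h ξ / (ξ - z) ^ 2) S
    rw [hφpre] at hpre
    rw [hI₀, ← hpre, ← integral_neg]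
    refine setIntegral_congr_fun hSmeas (fun ξ _ => ?_)
    have hsq : (φ ξ - z) ^ 2 = -((ξ - z) ^ 2) := by
      rw [hφ]
      simp only [add_sub_cancel_left, mul_pow, Complex.I_sq]
      ring
    rw [hsq, div_neg]
  -- the difference integral
  have hdiff : ∫ ξ in S, (h ξ - h (φ ξ)) / (ξ - z) ^ 2 = (2:ℂ) * I₀ := by
    have : ∫ ξ in S, (h ξ - h (φ ξ)) / (ξ - z) ^ 2
        = (∫ ξ in S, h ξ / (ξ - z) ^ 2) - ∫ ξ in S, h (φ ξ) / (ξ - z) ^ 2 := by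
      rw [← integral_sub hint1 hint2]
      refine setIntegral_congr_fun hSmeas (fun ξ _ => ?_)
      rw [sub_div]
    have hJ : (∫ ξ in S, h (φ ξ) / (ξ - z) ^ 2) = -I₀ := by rw [hkey, neg_neg]
    rw [this, hJ]
    ring
  -- norm bound via Hölder
  have hintg : IntegrableOn (fun ξ => A * C * ‖ξ - z‖ ^ (γ - 2)) S := by
    apply ContinuousOn.integrableOn_compact hScomp
    apply ContinuousOn.mul continuousOn_const
    apply ContinuousOn.rpow_const
      ((continuous_norm.comp (continuous_id.sub continuous_const)).continuousOn)
    intro ξ hξ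
    exact Or.inl (norm_ne_zero_iff.mpr (hne ξ hξ))
  have hnorm : ‖∫ ξ in S, (h ξ - h (φ ξ)) / (ξ - z) ^ 2‖
      ≤ ∫ ξ in S, A * C * ‖ξ - z‖ ^ (γ - 2) := by
    apply norm_integral_le_of_norm_le hintg
    filter_upwards [ae_restrict_mem hSmeas] with ξ hξ
    have hnz : ξ - z ≠ 0 := hne ξ hξ
    have hpos : 0 < ‖ξ - z‖ := norm_pos_iff.mpr hnz
    have hfactor : ξ - φ ξ = (1 - Complex.I) * (ξ - z) := by rw [hφ]; ring
    have h1 : ‖h ξ - h (φ ξ)‖ ≤ A * (C * ‖ξ - z‖ ^ γ) := by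
      have := hHolder ξ (φ ξ)
      rw [hfactor, norm_mul, Real.mul_rpow (norm_nonneg _) (norm_nonneg _)] at this
      exact this
    rw [norm_div, norm_pow]
    rw [div_le_iff₀ (by positivity)]
    calc ‖h ξ - h (φ ξ)‖ ≤ A * (C * ‖ξ - z‖ ^ γ) := h1
      _ = A * C * ‖ξ - z‖ ^ (γ - 2) * ‖ξ - z‖ ^ 2 := by
          have hx : ‖ξ - z‖ ^ (γ - 2) * ‖ξ - z‖ ^ 2 = ‖ξ - z‖ ^ γ := by
            rw [← Real.rpow_natCast ‖ξ - z‖ 2, ← Real.rpow_add hpos]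
            norm_num
          rw [mul_assoc (A * C), hx]
          ring
  -- translate and apply the radial bound
  have htrans : ∫ ξ in S, ‖ξ - z‖ ^ (γ - 2)
      = ∫ w in Metric.closedBall (0:ℂ) (δ * R) \ Metric.ball 0 ε, ‖w‖ ^ (γ - 2) := by
    have hτmp : MeasurePreserving (fun w : ℂ => w + z) volume volume :=
      measurePreserving_add_right volume z
    have hτemb : MeasurableEmbedding (fun w : ℂ => w + z) :=
      (Homeomorph.addRight z).measurableEmbedding
    have hpre := hτmp.setIntegral_preimage_emb hτemb (fun ξ => ‖ξ - z‖ ^ (γ - 2)) S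
    have hτpre : (fun w : ℂ => w + z) ⁻¹' S
        = Metric.closedBall (0:ℂ) (δ * R) \ Metric.ball 0 ε := by
      ext w
      simp [hS, Metric.mem_closedBall, Metric.mem_ball, dist_eq_norm]
    rw [hτpre] at hpre
    rw [← hpre]
    simp
  have hradial : ∫ ξ in S, ‖ξ - z‖ ^ (γ - 2) ≤ 2 * π * (δ * R) ^ γ / γ := by
    rw [htrans]
    exact radial_bound' γ ε (δ * R) hγ0 hε0 hε
  -- combine
  have hI₀bound : ‖I₀‖ ≤ A * C * π * (δ * R) ^ γ / γ := by
    have h2I : (2:ℝ) * ‖I₀‖ ≤ A * C * (2 * π * (δ * R) ^ γ / γ) := by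
      have : ‖(2:ℂ) * I₀‖ = 2 * ‖I₀‖ := by
        rw [norm_mul]; norm_num
      rw [← this, ← hdiff]
      calc ‖∫ ξ in S, (h ξ - h (φ ξ)) / (ξ - z) ^ 2‖
          ≤ ∫ ξ in S, A * C * ‖ξ - z‖ ^ (γ - 2) := hnorm
        _ = A * C * ∫ ξ in S, ‖ξ - z‖ ^ (γ - 2) := by
            rw [← integral_const_mul]
        _ ≤ A * C * (2 * π * (δ * R) ^ γ / γ) := by
            apply mul_le_mul_of_nonneg_left hradial (by positivity)
    have heq : A * C * (2 * π * (δ * R) ^ γ / γ) = 2 * (A * C * π * (δ * R) ^ γ / γ) := by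
      ring
    linarith
  -- final computation
  have hsplit : ∫ ξ in S, h ξ / (ξ - z) ^ 2 * (2 * Complex.I)
      = I₀ * (2 * Complex.I) := by
    rw [hI₀, ← integral_mul_const]
  rw [hsplit, norm_mul, norm_mul]
  have hn1 : ‖Complex.I / (2 * (π:ℂ))‖ = 1 / (2 * π) := by
    rw [norm_div, Complex.norm_I, norm_mul]
    simp [Complex.norm_real, abs_of_pos hπ]
  have hn2 : ‖(2:ℂ) * Complex.I‖ = 2 := by
    rw [norm_mul, Complex.norm_I]; norm_num
  rw [hn1, hn2]
  have : 1 / (2 * π) * (‖I₀‖ * 2) = ‖I₀‖ / π := by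
    field_simp
  rw [this]
  rw [div_le_iff₀ hπ]
  calc ‖I₀‖ ≤ A * C * π * (δ * R) ^ γ / γ := hI₀bound
    _ = A * C * (δ * R) ^ γ / γ * π := by ring
end

section
/- Let h : ℂ → ℂ be continuous and compactly supported in B(0,R), with Fourier coefficients h_k(r) = (1/2π)∫₀^{2π} e^{−ikθ}h(re^{iθ})dθ. Then for any z = re^{iθ₀} with r > R and any integer k < 0: (i/(4π²)) ∫₀^{2π} ∬_{B(0,R)} h(ξ) e^{−ikθ}/(ξ − re^{iθ})² dξ̄∧dξ dθ = 2(k+1) ∫₀^R (r^k/ρ^{k+1}) h_{k+2}(ρ) dρ, while for k ≥ 0 the left-hand side vanishes. -/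
open MeasureTheory Complex Set
open scoped Real

lemma epow (m : ℤ) (θ : ℝ) :
    Complex.exp (-Complex.I*m*θ) = (Complex.exp ((θ:ℂ)*Complex.I))^(-m) := by
  rw [← Complex.exp_int_mul]; congr 1; push_cast; ring

lemma ang (r : ℝ) (hr : 0 < r) (ξ : ℂ) (hξ : ‖ξ‖ < r) (k : ℤ) :
    (∫ θ in (0:ℝ)..(2*π), Complex.exp (-Complex.I*k*θ) / (ξ - r*Complex.exp (Complex.I*θ)) ^ 2)
      = if k ≤ -2 then -(2*π*((k:ℂ)+1)) * (r:ℂ)^k * ξ^(-k-2) else 0 := by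
  have hrC : (r:ℂ) ≠ 0 := Complex.ofReal_ne_zero.2 hr.ne'
  have hmem : ξ ∈ Metric.ball (0:ℂ) r := by simpa [Metric.mem_ball] using hξ
  by_cases hk : k ≤ -2
  · -- Cauchy derivative formula
    rw [if_pos hk]
    set n : ℕ := (-k-1).toNat with hn
    have hnz : ((n:ℤ)) = -k-1 := Int.toNat_of_nonneg (by omega)
    have hn1 : 1 ≤ n := by omega
    have H := Complex.two_pi_I_inv_smul_circleIntegral_sub_sq_inv_smul_of_differentiable
      (U := univ) isOpen_univ (subset_univ _) (f := fun z : ℂ => z ^ n)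
      ((differentiable_pow n).differentiableOn) hmem
    rw [deriv_pow_field] at H
    have h2pi : (2*(π:ℂ)*Complex.I) ≠ 0 := by
      simp [Real.pi_ne_zero, Complex.I_ne_zero]
    have H2 : (∫ θ in (0:ℝ)..(2*π),
        (circleMap 0 r θ * Complex.I) • (((circleMap 0 r θ - ξ)^2)⁻¹ • (circleMap 0 r θ)^n))
        = (2*π*Complex.I) * ((n:ℂ) * ξ^(n-1)) := by
      have := H
      rw [inv_smul_eq_iff₀ h2pi] at this
      simpa [circleIntegral, deriv_circleMap, smul_eq_mul] using this
    have key : ∀ θ : ℝ, Complex.exp (-Complex.I*k*θ) / (ξ - r*Complex.exp (Complex.I*θ)) ^ 2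
        = (Complex.I * (r:ℂ)^(n+1))⁻¹ *
          ((circleMap 0 r θ * Complex.I) • (((circleMap 0 r θ - ξ)^2)⁻¹ • (circleMap 0 r θ)^n)) := by
      intro θ
      have he : Complex.exp ((θ:ℂ)*Complex.I) ≠ 0 := Complex.exp_ne_zero _
      have hnorm : ‖(r:ℂ) * Complex.exp ((θ:ℂ)*Complex.I)‖ = r := by
        simp [map_mul, Complex.norm_exp, abs_of_pos hr]
      have hD : (r:ℂ)*Complex.exp ((θ:ℂ)*Complex.I) - ξ ≠ 0 := by
        intro h0
        have hx : ξ = (r:ℂ) * Complex.exp ((θ:ℂ)*Complex.I) := by linear_combination -h0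
        rw [hx, hnorm] at hξ
        exact lt_irrefl _ hξ
      rw [epow, circleMap_zero, smul_eq_mul, smul_eq_mul]
      rw [show -k = ((n+1 : ℕ) : ℤ) by omega, zpow_natCast]
      rw [show Complex.I * (θ:ℂ) = (θ:ℂ) * Complex.I from mul_comm _ _]
      rw [show (ξ - (r:ℂ)*Complex.exp ((θ:ℂ)*Complex.I))^2
            = ((r:ℂ)*Complex.exp ((θ:ℂ)*Complex.I) - ξ)^2 by ring]
      rw [div_eq_iff (pow_ne_zero 2 hD)]
      rw [mul_pow]
      field_simp
      ring
    rw [intervalIntegral.integral_congr (fun θ _ => key θ), intervalIntegral.integral_const_mul,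
      H2]
    have hrk : (r:ℂ)^k = ((r:ℂ)^(n+1 : ℕ))⁻¹ := by
      rw [show k = -((n+1 : ℕ) : ℤ) by omega, zpow_neg, zpow_natCast]
    have hξk : ξ^(-k-2) = ξ^(n-1 : ℕ) := by
      rw [show -k-2 = ((n-1 : ℕ) : ℤ) by omega, zpow_natCast]
    rw [hrk, hξk]
    have hnc : (n:ℂ) = -((k:ℂ)+1) := by
      have h1 : ((n:ℤ):ℂ) = ((-k-1:ℤ):ℂ) := by rw [hnz]
      push_cast at h1
      linear_combination h1
    rw [hnc]
    have hA : ((r:ℂ)^(n+1:ℕ)) ≠ 0 := pow_ne_zero _ hrC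
    field_simp
  · -- mean value: integral is 0
    rw [if_neg hk]
    push_neg at hk
    set q : ℕ := (k+2).toNat with hqdef
    have hqz : (q:ℤ) = k+2 := Int.toNat_of_nonneg (by omega)
    have hq1 : 1 ≤ q := by omega
    set G : ℂ → ℂ := fun z => (r:ℂ)^2 * z^q / ((r:ℂ)^q * (ξ*z - (r:ℂ)^2)^2) with hG
    have hUopen : IsOpen {z : ℂ | ξ*z - (r:ℂ)^2 ≠ 0} :=
      IsOpen.preimage (by continuity) isOpen_compl_singleton
    have hsubU : Metric.closedBall (0:ℂ) r ⊆ {z : ℂ | ξ*z - (r:ℂ)^2 ≠ 0} := by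
      intro z hz h0
      have hz' : ‖z‖ ≤ r := by simpa [Metric.mem_closedBall] using hz
      have h1 : ξ * z = (r:ℂ)^2 := by linear_combination h0
      have h2 : ‖ξ * z‖ = r^2 := by
        rw [h1]; simp [abs_of_pos hr, sq_abs]
      rw [norm_mul] at h2
      nlinarith [norm_nonneg ξ, norm_nonneg z]
    have hGd : DifferentiableOn ℂ G {z : ℂ | ξ*z - (r:ℂ)^2 ≠ 0} := by
      apply DifferentiableOn.div
      · exact (differentiable_const _ |>.mul (differentiable_pow q)).differentiableOn
      · exact ((differentiable_const _).mul
          (((differentiable_const ξ).mul differentiable_fun_id).sub (differentiable_const _) |>.pow 2)).differentiableOn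
      · intro z hz
        exact mul_ne_zero (pow_ne_zero _ hrC) (pow_ne_zero _ hz)
    have hdc : DiffContOnCl ℂ G (Metric.ball 0 r) :=
      DifferentiableOn.diffContOnCl (by
        rw [closure_ball (0:ℂ) hr.ne']
        exact hGd.mono hsubU)
    have H := hdc.circleIntegral_sub_inv_smul (show (0:ℂ) ∈ Metric.ball (0:ℂ) r by
      simpa [Metric.mem_ball] using hr)
    have hG0 : G 0 = 0 := by
      simp [hG, zero_pow (show q ≠ 0 by omega)]
    have H2 : (∫ θ in (0:ℝ)..(2*π), G (circleMap 0 r θ)) = 0 := by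
      rw [hG0, smul_zero] at H
      simp only [circleIntegral, deriv_circleMap, sub_zero, smul_eq_mul] at H
      have hcm : ∀ θ : ℝ, circleMap 0 r θ * Complex.I *
          ((circleMap 0 r θ)⁻¹ * G (circleMap 0 r θ)) = Complex.I * G (circleMap 0 r θ) := by
        intro θ
        have h0 : circleMap 0 r θ ≠ 0 := circleMap_ne_center hr.ne'
        field_simp
      rw [intervalIntegral.integral_congr (fun θ _ => hcm θ),
        intervalIntegral.integral_const_mul] at H
      rcases mul_eq_zero.1 H with h | h
      · exact absurd h Complex.I_ne_zero
      · exact h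
    have hrefl := intervalIntegral.integral_comp_sub_left
      (a := 0) (b := 2*π)
      (fun x : ℝ => Complex.exp (-Complex.I*k*(x:ℝ)) / (ξ - r*Complex.exp (Complex.I*(x:ℝ)))^2) (2*π)
    simp only [sub_self, sub_zero] at hrefl
    rw [← hrefl]
    have hpt : ∀ θ : ℝ, Complex.exp (-Complex.I*k*((2*π - θ : ℝ):ℂ)) /
        (ξ - r*Complex.exp (Complex.I*((2*π - θ : ℝ):ℂ)))^2 = G (circleMap 0 r θ) := by
      intro θ
      have he : Complex.exp ((θ:ℂ)*Complex.I) ≠ 0 := Complex.exp_ne_zero _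
      have hne2 : ξ*((r:ℂ)*Complex.exp ((θ:ℂ)*Complex.I)) - (r:ℂ)^2 ≠ 0 := by
        apply hsubU
        simp [Metric.mem_closedBall, map_mul, Complex.norm_exp,
          abs_of_pos hr, Complex.dist_eq]
      have hne1 : ξ - (r:ℂ)*(Complex.exp ((θ:ℂ)*Complex.I))⁻¹ ≠ 0 := by
        intro h0
        apply hne2
        have hx : ξ = (r:ℂ)*(Complex.exp ((θ:ℂ)*Complex.I))⁻¹ := by linear_combination h0
        rw [hx]
        field_simp
        ring
      push_cast
      rw [show -Complex.I*(k:ℂ)*(2*(π:ℂ) - (θ:ℂ)) = ((-k : ℤ):ℂ)*(2*(π:ℂ)*Complex.I)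
            + ((k:ℤ):ℂ)*((θ:ℂ)*Complex.I) by push_cast; ring]
      rw [Complex.exp_add, Complex.exp_int_mul_two_pi_mul_I, one_mul, Complex.exp_int_mul]
      rw [show Complex.I*(2*(π:ℂ) - (θ:ℂ)) = (2*(π:ℂ)*Complex.I) + (-(θ:ℂ))*Complex.I by ring]
      rw [Complex.exp_add, Complex.exp_two_pi_mul_I, one_mul]
      rw [show (-(θ:ℂ))*Complex.I = -((θ:ℂ)*Complex.I) by ring, Complex.exp_neg]
      rw [circleMap_zero]
      simp only [hG]
      rw [show (k:ℤ) = (q:ℤ) - 2 by omega, zpow_sub₀ he, zpow_natCast,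
        show ((2:ℤ):ℤ) = ((2:ℕ):ℤ) by norm_num, zpow_natCast]
      rw [div_div, div_eq_div_iff (by
          exact mul_ne_zero (pow_ne_zero _ he) (pow_ne_zero 2 hne1))
        (mul_ne_zero (pow_ne_zero _ hrC) (pow_ne_zero 2 hne2))]
      rw [mul_pow]
      field_simp
    rw [intervalIntegral.integral_congr (fun θ _ => hpt θ)]
    exact H2

lemma per_shift (u : ℝ → ℂ) (hu : Continuous u) (hper : ∀ x, u (x + 2*π) = u x) :
    ∫ x in (-π)..π, u x = ∫ x in (0:ℝ)..(2*π), u x := by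
  have h1 : (∫ x in (-π)..(0:ℝ), u x) = ∫ x in π..(2*π), u x := by
    have h2 := intervalIntegral.integral_comp_add_right (a := -π) (b := 0) u (2*π)
    rw [intervalIntegral.integral_congr (g := u) (fun x _ => hper x)] at h2
    rw [h2, show -π + 2*π = π by ring, show (0:ℝ) + 2*π = 2*π by ring]
  have i1 : IntervalIntegrable u volume (-π) 0 := hu.intervalIntegrable _ _
  have i2 : IntervalIntegrable u volume 0 π := hu.intervalIntegrable _ _
  have i3 : IntervalIntegrable u volume π (2*π) := hu.intervalIntegrable _ _
  rw [← intervalIntegral.integral_add_adjacent_intervals i1 i2,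
    ← intervalIntegral.integral_add_adjacent_intervals i2 i3, h1]
  ring

lemma polarP (h : ℂ → ℂ) (R : ℝ) (hR : 0 < R) (hc : Continuous h)
    (hsupp : ∀ z : ℂ, R ≤ ‖z‖ → h z = 0) (m : ℕ) :
    (∫ ξ in Metric.ball (0:ℂ) R, h ξ * ξ^m)
      = ∫ ρ in (0:ℝ)..R, (ρ:ℂ)^(m+1) *
          ∫ α in (0:ℝ)..(2*π), Complex.exp ((m:ℂ)*((α:ℂ)*Complex.I)) *
            h (ρ*Complex.exp ((α:ℂ)*Complex.I)) := by
  have h1 : (∫ ξ in Metric.ball (0:ℂ) R, h ξ * ξ^m) = ∫ ξ, h ξ * ξ^m :=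
    setIntegral_eq_integral_of_forall_compl_eq_zero (fun ξ hξ => by
      have : R ≤ ‖ξ‖ := by simpa [Metric.mem_ball, not_lt] using hξ
      rw [hsupp ξ this, zero_mul])
  rw [h1, ← Complex.integral_comp_polarCoord_symm (fun ξ => h ξ * ξ^m), polarCoord_target]
  set g₂ : ℝ × ℝ → ℂ :=
    fun p => p.1 • (h (Complex.polarCoord.symm p) * (Complex.polarCoord.symm p)^m) with hg₂
  have hbig : MeasurableSet (Ioi (0:ℝ) ×ˢ Ioo (-π) π) := measurableSet_Ioi.prod measurableSet_Ioo
  have hsml : MeasurableSet (Ioc (0:ℝ) R ×ˢ Ioo (-π) π) := measurableSet_Ioc.prod measurableSet_Ioo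
  have hzero : ∀ p : ℝ × ℝ, R ≤ p.1 → g₂ p = 0 := by
    intro p hp
    have : R ≤ ‖(Complex.polarCoord.symm p : ℂ)‖ := by
      rw [Complex.norm_polarCoord_symm]
      exact le_trans hp (le_abs_self _)
    rw [hg₂]
    simp only []
    rw [hsupp _ this, zero_mul, smul_zero]
  have hindeq : (Ioi (0:ℝ) ×ˢ Ioo (-π) π).indicator g₂
      = (Ioc (0:ℝ) R ×ˢ Ioo (-π) π).indicator g₂ := by
    funext p
    by_cases hp1 : p ∈ Ioc (0:ℝ) R ×ˢ Ioo (-π) π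
    · have hp1' := Set.mem_prod.1 hp1
      rw [indicator_of_mem hp1, indicator_of_mem (Set.mem_prod.2
        ⟨Set.mem_Ioi.2 (Set.mem_Ioc.1 hp1'.1).1, hp1'.2⟩)]
    · rw [indicator_of_notMem hp1]
      by_cases hp2 : p ∈ Ioi (0:ℝ) ×ˢ Ioo (-π) π
      · rw [indicator_of_mem hp2]
        have hp2' := Set.mem_prod.1 hp2
        have : R ≤ p.1 := by
          by_contra hlt
          push_neg at hlt
          exact hp1 (Set.mem_prod.2 ⟨Set.mem_Ioc.2 ⟨Set.mem_Ioi.1 hp2'.1, hlt.le⟩, hp2'.2⟩)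
        exact hzero p this
      · rw [indicator_of_notMem hp2]
  have hg₂c : Continuous g₂ := by
    have hfun : g₂ = fun p : ℝ × ℝ => p.1 • (h ((p.1:ℂ) * (Real.cos p.2 + Real.sin p.2 * Complex.I))
        * ((p.1:ℂ) * (Real.cos p.2 + Real.sin p.2 * Complex.I))^m) := by
      funext p
      rw [hg₂]
      simp only [Complex.polarCoord_symm_apply]
    rw [hfun]
    have hφ : Continuous fun p : ℝ × ℝ =>
        ((p.1:ℂ) * ((Real.cos p.2 : ℂ) + (Real.sin p.2 : ℂ) * Complex.I)) :=
      (Complex.continuous_ofReal.comp continuous_fst).mul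
        (((Complex.continuous_ofReal.comp (Real.continuous_cos.comp continuous_snd))).add
          ((Complex.continuous_ofReal.comp (Real.continuous_sin.comp continuous_snd)).mul
            continuous_const))
    exact continuous_fst.smul ((hc.comp hφ).mul (hφ.pow m))
  have hint2 : IntegrableOn g₂ (Ioc (0:ℝ) R ×ˢ Ioo (-π) π) (volume.prod volume) := by
    apply IntegrableOn.mono_set (t := Icc (0:ℝ) R ×ˢ Icc (-π) π)
    · exact ContinuousOn.integrableOn_compact (isCompact_Icc.prod isCompact_Icc)
        hg₂c.continuousOn
    · exact prod_mono Ioc_subset_Icc_self Ioo_subset_Icc_self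
  have hstep : (∫ p in Ioi (0:ℝ) ×ˢ Ioo (-π) π, g₂ p) = ∫ p in Ioc (0:ℝ) R ×ˢ Ioo (-π) π, g₂ p := by
    rw [← integral_indicator hbig, ← integral_indicator hsml, hindeq]
  have hinner : ∀ ρ : ℝ, (∫ α in Ioo (-π) π, g₂ (ρ, α))
      = (ρ:ℂ)^(m+1) * ∫ α in (0:ℝ)..(2*π), Complex.exp ((m:ℂ)*((α:ℂ)*Complex.I)) *
          h (ρ*Complex.exp ((α:ℂ)*Complex.I)) := by
    intro ρ
    rw [← integral_Ioc_eq_integral_Ioo,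
      ← intervalIntegral.integral_of_le (by linarith [Real.pi_pos] : -π ≤ π)]
    have hptw : ∀ α : ℝ, g₂ (ρ, α) = (ρ:ℂ)^(m+1) *
        (Complex.exp ((m:ℂ)*((α:ℂ)*Complex.I)) * h ((ρ:ℂ)*Complex.exp ((α:ℂ)*Complex.I))) := by
      intro α
      rw [hg₂]
      simp only [Complex.polarCoord_symm_apply]
      rw [Complex.real_smul, Complex.ofReal_cos, Complex.ofReal_sin, ← Complex.exp_mul_I,
        mul_pow, ← Complex.exp_nat_mul]
      ring
    rw [intervalIntegral.integral_congr (fun α _ => hptw α)]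
    have hcont : Continuous fun α : ℝ => (ρ:ℂ)^(m+1) *
        (Complex.exp ((m:ℂ)*((α:ℂ)*Complex.I)) * h ((ρ:ℂ)*Complex.exp ((α:ℂ)*Complex.I))) := by
      apply continuous_const.mul
      have hψ : Continuous fun α : ℝ => (α:ℂ)*Complex.I :=
        (Complex.continuous_ofReal).mul continuous_const
      exact (Complex.continuous_exp.comp (continuous_const.mul hψ)).mul
        (hc.comp (continuous_const.mul (Complex.continuous_exp.comp hψ)))
    have hper : ∀ x : ℝ, (ρ:ℂ)^(m+1) *
        (Complex.exp ((m:ℂ)*(((x + 2*π : ℝ):ℂ)*Complex.I)) *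
          h ((ρ:ℂ)*Complex.exp (((x + 2*π : ℝ):ℂ)*Complex.I)))
        = (ρ:ℂ)^(m+1) *
        (Complex.exp ((m:ℂ)*((x:ℂ)*Complex.I)) * h ((ρ:ℂ)*Complex.exp ((x:ℂ)*Complex.I))) := by
      intro x
      have e1 : Complex.exp ((m:ℂ)*(((x + 2*π : ℝ):ℂ)*Complex.I))
          = Complex.exp ((m:ℂ)*((x:ℂ)*Complex.I)) := by
        rw [show (m:ℂ)*(((x + 2*π : ℝ):ℂ)*Complex.I)
            = (m:ℂ)*((x:ℂ)*Complex.I) + ((m:ℤ):ℂ)*(2*(π:ℂ)*Complex.I) by push_cast; ring,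
          Complex.exp_add, Complex.exp_int_mul_two_pi_mul_I, mul_one]
      have e2 : Complex.exp (((x + 2*π : ℝ):ℂ)*Complex.I) = Complex.exp ((x:ℂ)*Complex.I) := by
        rw [show (((x + 2*π : ℝ):ℂ))*Complex.I
            = (x:ℂ)*Complex.I + 2*(π:ℂ)*Complex.I by push_cast; ring,
          Complex.exp_add, Complex.exp_two_pi_mul_I, mul_one]
      rw [e1, e2]
    rw [per_shift _ hcont hper]
    exact intervalIntegral.integral_const_mul _ _
  calc (∫ p in Ioi (0:ℝ) ×ˢ Ioo (-π) π,
        p.1 • (fun ξ => h ξ * ξ^m) (Complex.polarCoord.symm p))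
      = ∫ p in Ioi (0:ℝ) ×ˢ Ioo (-π) π, g₂ p := rfl
    _ = ∫ p in Ioc (0:ℝ) R ×ˢ Ioo (-π) π, g₂ p := hstep
    _ = ∫ ρ in Ioc (0:ℝ) R, ∫ α in Ioo (-π) π, g₂ (ρ, α) := by
        rw [Measure.volume_eq_prod]
        exact setIntegral_prod g₂ hint2
    _ = ∫ ρ in Ioc (0:ℝ) R, (ρ:ℂ)^(m+1) *
          ∫ α in (0:ℝ)..(2*π), Complex.exp ((m:ℂ)*((α:ℂ)*Complex.I)) *
            h (ρ*Complex.exp ((α:ℂ)*Complex.I)) :=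
        setIntegral_congr_fun measurableSet_Ioc (fun ρ _ => hinner ρ)
    _ = ∫ ρ in (0:ℝ)..R, (ρ:ℂ)^(m+1) *
          ∫ α in (0:ℝ)..(2*π), Complex.exp ((m:ℂ)*((α:ℂ)*Complex.I)) *
            h (ρ*Complex.exp ((α:ℂ)*Complex.I)) :=
        (intervalIntegral.integral_of_le hR.le).symm

/-- for continuous `h` supported in `B(0,R)` and `r > R`,
`(i/(4π²)) ∫₀^{2π} ∬_{B(0,R)} h(ξ)e^{−ikθ}/(ξ−re^{iθ})² dξ̄∧dξ dθ
  = 2(k+1) ∫₀^R (r^k/ρ^{k+1}) h_{k+2}(ρ) dρ` for `k < 0`, and `0` for `k ≥ 0`.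
Here `dξ̄∧dξ = 2i dA` and `h_{k+2}` is the angular Fourier coefficient. -/
theorem stmt9 (h : ℂ → ℂ) (R : ℝ) (hR : 0 < R) (hc : Continuous h)
    (hsupp : ∀ z : ℂ, R ≤ ‖z‖ → h z = 0) (k : ℤ) (r : ℝ) (hr : R < r) :
    (Complex.I / (4 * (π : ℂ) ^ 2)) *
        ∫ θ in (0:ℝ)..(2 * π),
          (∫ ξ in Metric.ball (0:ℂ) R,
            h ξ * Complex.exp (-Complex.I * k * θ) /
              (ξ - r * Complex.exp (Complex.I * θ)) ^ 2 * (2 * Complex.I))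
      = if k < 0 then
          2 * ((k : ℂ) + 1) *
            ∫ ρ in (0:ℝ)..R,
              ((r : ℂ) ^ k / (ρ : ℂ) ^ (k + 1)) *
                ((1 / (2 * (π : ℂ))) * ∫ α in (0:ℝ)..(2 * π),
                  Complex.exp (-Complex.I * (k + 2) * α) * h (ρ * Complex.exp (Complex.I * α)))
        else 0 := by
  have hr0 : (0:ℝ) < r := hR.trans hr
  have hrC : (r:ℂ) ≠ 0 := Complex.ofReal_ne_zero.2 hr0.ne'
  have h2π : (0:ℝ) ≤ 2*π := by positivity
  set F : ℝ → ℂ → ℂ := fun θ ξ => h ξ * Complex.exp (-Complex.I * k * θ) /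
      (ξ - r * Complex.exp (Complex.I * θ)) ^ 2 * (2 * Complex.I) with hF
  -- continuity and integrability for Fubini
  have hcont : ContinuousOn (Function.uncurry F)
      (Icc (0:ℝ) (2*π) ×ˢ Metric.closedBall (0:ℂ) R) := by
    apply ContinuousOn.mul _ continuousOn_const
    apply ContinuousOn.div
    · apply Continuous.continuousOn
      exact (hc.comp continuous_snd).mul (Complex.continuous_exp.comp
        (continuous_const.mul (Complex.continuous_ofReal.comp continuous_fst)))
    · apply Continuous.continuousOn
      exact (continuous_snd.sub (continuous_const.mul (Complex.continuous_exp.comp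
        (continuous_const.mul (Complex.continuous_ofReal.comp continuous_fst))))).pow 2
    · rintro ⟨θ, ξ⟩ ⟨-, hξ⟩
      dsimp only at hξ ⊢
      apply pow_ne_zero
      apply sub_ne_zero.2
      intro hEq
      have h1 : ‖ξ‖ ≤ R := by simpa [Metric.mem_closedBall] using hξ
      have h2 : ‖(r:ℂ) * Complex.exp (Complex.I * (θ:ℂ))‖ = r := by
        simp [map_mul, Complex.norm_exp, abs_of_pos hr0]
      rw [hEq, h2] at h1
      linarith
  have hInt : IntegrableOn (Function.uncurry F)
      (Ioc (0:ℝ) (2*π) ×ˢ Metric.ball (0:ℂ) R) (volume.prod volume) :=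
    (ContinuousOn.integrableOn_compact (isCompact_Icc.prod (isCompact_closedBall _ _))
      hcont).mono_set (prod_mono Ioc_subset_Icc_self Metric.ball_subset_closedBall)
  have hswap : (∫ θ in Ioc (0:ℝ) (2*π), ∫ ξ in Metric.ball (0:ℂ) R, F θ ξ)
      = ∫ ξ in Metric.ball (0:ℂ) R, ∫ θ in Ioc (0:ℝ) (2*π), F θ ξ := by
    apply MeasureTheory.integral_integral_swap
    rw [Measure.prod_restrict]
    exact hInt
  have hinner : ∀ ξ ∈ Metric.ball (0:ℂ) R, (∫ θ in Ioc (0:ℝ) (2*π), F θ ξ)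
      = h ξ * (2*Complex.I) *
        (if k ≤ -2 then -(2*π*((k:ℂ)+1)) * (r:ℂ)^k * ξ^(-k-2) else 0) := by
    intro ξ hξ
    have hξr : ‖ξ‖ < r := lt_trans (by simpa [Metric.mem_ball] using hξ) hr
    rw [← intervalIntegral.integral_of_le h2π]
    rw [intervalIntegral.integral_congr (g := fun θ : ℝ => (h ξ * (2*Complex.I)) *
      (Complex.exp (-Complex.I*k*θ) / (ξ - r*Complex.exp (Complex.I*θ))^2))
      (fun θ _ => by rw [hF]; ring)]
    rw [intervalIntegral.integral_const_mul, ang r hr0 ξ hξr k]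
  show (Complex.I / (4 * (π : ℂ) ^ 2)) *
      (∫ θ in (0:ℝ)..(2 * π), ∫ ξ in Metric.ball (0:ℂ) R, F θ ξ) = _
  rw [intervalIntegral.integral_of_le h2π, hswap]
  by_cases hk2 : k ≤ -2
  · -- main case
    set m : ℕ := (-k-2).toNat with hmdef
    have hm : ((m:ℤ)) = -k-2 := Int.toNat_of_nonneg (by omega)
    rw [setIntegral_congr_fun measurableSet_ball
      (g := fun ξ => (2*Complex.I * (-(2*π*((k:ℂ)+1))) * (r:ℂ)^k) * (h ξ * ξ^m))
      (fun ξ hξ => by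
        rw [hinner ξ hξ, if_pos hk2, show (-k-2 : ℤ) = ((m:ℕ):ℤ) by omega, zpow_natCast]
        ring)]
    rw [MeasureTheory.integral_const_mul, polarP h R hR hc hsupp m, if_pos (by omega : k < 0)]
    -- identify the RHS radial integrand
    have hQ : ∀ ρ : ℝ,
        (∫ α in (0:ℝ)..(2*π), Complex.exp (-Complex.I * (k + 2) * α) *
          h (ρ * Complex.exp (Complex.I * α)))
        = ∫ α in (0:ℝ)..(2*π), Complex.exp ((m:ℂ)*((α:ℂ)*Complex.I)) *
            h (ρ*Complex.exp ((α:ℂ)*Complex.I)) := by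
      intro ρ
      apply intervalIntegral.integral_congr
      intro α _
      dsimp only
      have e1 : -Complex.I * ((k:ℂ) + 2) * (α:ℂ) = (m:ℂ)*((α:ℂ)*Complex.I) := by
        have : (m:ℂ) = -((k:ℂ)+2) := by
          have h1 : ((m:ℤ):ℂ) = ((-k-2:ℤ):ℂ) := by rw [hm]
          push_cast at h1
          linear_combination h1
        rw [this]
        ring
      rw [e1, show Complex.I * (α:ℂ) = (α:ℂ) * Complex.I from mul_comm _ _]
    have hRHSpt : ∀ ρ : ℝ,
        ((r : ℂ) ^ k / (ρ : ℂ) ^ (k + 1)) *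
          ((1 / (2 * (π : ℂ))) * ∫ α in (0:ℝ)..(2 * π),
            Complex.exp (-Complex.I * (k + 2) * α) * h (ρ * Complex.exp (Complex.I * α)))
        = ((r:ℂ)^k * (1 / (2 * (π:ℂ)))) * ((ρ:ℂ)^(m+1) *
            ∫ α in (0:ℝ)..(2*π), Complex.exp ((m:ℂ)*((α:ℂ)*Complex.I)) *
              h (ρ*Complex.exp ((α:ℂ)*Complex.I))) := by
      intro ρ
      rw [hQ ρ]
      by_cases hρ : (ρ:ℂ) = 0
      · rw [hρ]
        rw [zero_zpow _ (by omega : k+1 ≠ 0), zero_pow (by omega : m+1 ≠ 0)]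
        simp
      · rw [show (k+1 : ℤ) = -((m+1:ℕ):ℤ) by omega, zpow_neg, zpow_natCast]
        rw [div_inv_eq_mul]
        ring
    rw [intervalIntegral.integral_congr (fun ρ _ => hRHSpt ρ),
      intervalIntegral.integral_const_mul]
    -- final scalar identity
    have hπ : (π:ℂ) ≠ 0 := Complex.ofReal_ne_zero.2 Real.pi_ne_zero
    set S := ∫ ρ in (0:ℝ)..R, (ρ:ℂ)^(m+1) *
        ∫ α in (0:ℝ)..(2*π), Complex.exp ((m:ℂ)*((α:ℂ)*Complex.I)) *
          h (ρ*Complex.exp ((α:ℂ)*Complex.I)) with hS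
    field_simp
    linear_combination (-4*((k:ℂ)+1) * S) * Complex.I_sq
  · -- k ≥ -1 : everything vanishes
    have hz : (∫ ξ in Metric.ball (0:ℂ) R, ∫ θ in Ioc (0:ℝ) (2*π), F θ ξ) = 0 := by
      rw [setIntegral_congr_fun measurableSet_ball (g := fun _ => (0:ℂ))
        (fun ξ hξ => by rw [hinner ξ hξ, if_neg hk2, mul_zero])]
      exact integral_zero _ _
    rw [hz, mul_zero]
    by_cases hk0 : k < 0
    · rw [if_pos hk0]
      have hk1 : k = -1 := by omega
      subst hk1
      norm_num
    · rw [if_neg hk0]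
end
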